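/- Let E₍?₎ satisfy 0 ≤ E₍?₎ ≤ 𝟙 and let Δ be the orthogonal projector onto ker(𝟙 − E₍?₎). If E₍?₎(γ₂ − γ₁)E₍?₎(𝟙 − E₍?₎) = 0, then E₍?₎(γ₂ − γ₁)E₍?₎ = Δ(γ₂ − γ₁)Δ. -/

import Mathlib

open Matrix ComplexOrder

/-- If `0 ≤ E? ≤ 𝟙` and `E?(γ₂−γ₁)E?(𝟙−E?) = 0`, then
`E?(γ₂−γ₁)E? = Δ(γ₂−γ₁)Δ`, where `Δ` is the orthogonal projector onto `ker (𝟙−E?)`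
(characterized as the self-adjoint idempotent with range `ker (𝟙−E?)`). -/
theorem stmt_13 {n : ℕ} (γ₁ γ₂ Eq D : Matrix (Fin n) (Fin n) ℂ)
    (hγ₁ : γ₁ᴴ = γ₁) (hγ₂ : γ₂ᴴ = γ₂)
    (hEq : Eq.PosSemidef) (hEq' : (1 - Eq).PosSemidef)
    (hDh : Dᴴ = D) (hDi : D * D = D)
    (hDr : LinearMap.range (Matrix.toEuclideanLin D)
        = LinearMap.ker (Matrix.toEuclideanLin (1 - Eq)))
    (h : Eq * (γ₂ - γ₁) * Eq * (1 - Eq) = 0) :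
    Eq * (γ₂ - γ₁) * Eq = D * (γ₂ - γ₁) * D := by
  have hE : Eqᴴ = Eq := hEq.1
  set M : Matrix (Fin n) (Fin n) ℂ := γ₂ - γ₁ with hMdef
  set A : Matrix (Fin n) (Fin n) ℂ := Eq * M * Eq with hAdef
  -- (1 - Eq) * D = 0, i.e. Eq * D = D
  have hmul : Matrix.toEuclideanLin ((1 - Eq) * D) =
      (Matrix.toEuclideanLin (1 - Eq)).comp (Matrix.toEuclideanLin D) := by
    simp only [Matrix.toEuclideanLin_eq_toLin]
    exact Matrix.toLin_mul _ _ _ _ _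
  have hED0 : (1 - Eq) * D = 0 := by
    have hz : Matrix.toEuclideanLin ((1 - Eq) * D) = 0 := by
      rw [hmul]
      refine LinearMap.ext fun x => ?_
      have hx : Matrix.toEuclideanLin D x ∈ LinearMap.ker (Matrix.toEuclideanLin (1 - Eq)) :=
        hDr ▸ LinearMap.mem_range_self _ x
      simpa using LinearMap.mem_ker.mp hx
    exact (LinearEquiv.map_eq_zero_iff _).mp hz
  have hED : Eq * D = D := by
    have h' := hED0
    rw [sub_mul, one_mul] at h'
    exact (sub_eq_zero.mp h').symm
  have hDE : D * Eq = D := by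
    have := congrArg conjTranspose hED
    rwa [conjTranspose_mul, hDh, hE] at this
  have hMh : Mᴴ = M := by rw [hMdef, conjTranspose_sub, hγ₁, hγ₂]
  have hAh : Aᴴ = A := by
    rw [hAdef, conjTranspose_mul, conjTranspose_mul, hE, hMh, mul_assoc]
  have hAE : A * Eq = A := by
    have h' : A * (1 - Eq) = 0 := h
    rw [mul_sub, mul_one, sub_eq_zero] at h'
    exact h'.symm
  -- D is PSD
  have hDps : D.PosSemidef := by
    have := Matrix.posSemidef_conjTranspose_mul_self D
    rwa [hDh, hDi] at this
  -- K := 1 - Eq + D is positive definite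
  have hK : (1 - Eq + D).PosDef := by
    refine Matrix.posDef_iff_dotProduct_mulVec.mpr ⟨hEq'.1.add hDps.1, fun x hx => ?_⟩
    have h1 : 0 ≤ star x ⬝ᵥ (1 - Eq) *ᵥ x := hEq'.dotProduct_mulVec_nonneg x
    have h2 : 0 ≤ star x ⬝ᵥ D *ᵥ x := hDps.dotProduct_mulVec_nonneg x
    have hsum : star x ⬝ᵥ (1 - Eq + D) *ᵥ x
        = star x ⬝ᵥ (1 - Eq) *ᵥ x + star x ⬝ᵥ D *ᵥ x := by
      rw [add_mulVec, dotProduct_add]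
    rw [hsum]
    refine lt_of_le_of_ne (add_nonneg h1 h2) fun heq => ?_
    have hsum0 : star x ⬝ᵥ (1 - Eq) *ᵥ x + star x ⬝ᵥ D *ᵥ x = 0 := heq.symm
    have hq1 : star x ⬝ᵥ (1 - Eq) *ᵥ x = 0 := by
      have hle : star x ⬝ᵥ (1 - Eq) *ᵥ x ≤ 0 := by
        rw [eq_neg_of_add_eq_zero_left hsum0]
        exact neg_nonpos.mpr h2
      exact le_antisymm hle h1
    have hq2 : star x ⬝ᵥ D *ᵥ x = 0 := by rwa [hq1, zero_add] at hsum0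
    have hmv : (1 - Eq) *ᵥ x = 0 := (hEq'.dotProduct_mulVec_zero_iff x).mp hq1
    have hxmem : (WithLp.equiv 2 (Fin n → ℂ)).symm x
        ∈ LinearMap.ker (Matrix.toEuclideanLin (1 - Eq)) := by
      rw [LinearMap.mem_ker, Matrix.toEuclideanLin_apply]
      simp [hmv]
    rw [← hDr] at hxmem
    obtain ⟨y, hy⟩ := hxmem
    have hy' : D *ᵥ (WithLp.equiv 2 (Fin n → ℂ)) y = x := by
      have := congrArg (WithLp.equiv 2 (Fin n → ℂ)) hy
      simpa [Matrix.toEuclideanLin_apply] using this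
    have hDx : D *ᵥ x = x := by
      calc D *ᵥ x = D *ᵥ (D *ᵥ (WithLp.equiv 2 (Fin n → ℂ)) y) := by rw [hy']
        _ = (D * D) *ᵥ (WithLp.equiv 2 (Fin n → ℂ)) y := Matrix.mulVec_mulVec _ _ _
        _ = x := by rw [hDi, hy']
    rw [hDx] at hq2
    exact hx (dotProduct_star_self_eq_zero.mp hq2)
  -- (Eq - D) * (1 - Eq + D) = Eq - Eq * Eq
  have hNN : (Eq - D) * (1 - Eq + D) = Eq - Eq * Eq := by
    have expand : (Eq - D) * (1 - Eq + D)
        = Eq - Eq * Eq + Eq * D - D + D * Eq - D * D := by noncomm_ring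
    rw [expand, hED, hDE, hDi]
    abel
  -- A * (Eq - D) * (1 - Eq + D) = 0
  have h0 : A * (Eq - D) * (1 - Eq + D) = 0 := by
    rw [mul_assoc, hNN, mul_sub, ← mul_assoc, hAE, hAE, sub_self]
  -- cancel the invertible factor
  have hu : IsUnit (1 - Eq + D).det := (Matrix.isUnit_iff_isUnit_det _).mp hK.isUnit
  have hinv : (1 - Eq + D) * (1 - Eq + D)⁻¹ = 1 := Matrix.mul_nonsing_inv _ hu
  have hAN : A * (Eq - D) = 0 := by
    calc A * (Eq - D) = A * (Eq - D) * ((1 - Eq + D) * (1 - Eq + D)⁻¹) := by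
          rw [hinv, mul_one]
      _ = (A * (Eq - D) * (1 - Eq + D)) * (1 - Eq + D)⁻¹ := (mul_assoc (A * (Eq - D)) _ _).symm
      _ = 0 := by rw [h0, zero_mul]
  have hAD : A * D = A := by
    have : A * Eq - A * D = 0 := by rw [← mul_sub]; exact hAN
    rw [hAE, sub_eq_zero] at this
    exact this.symm
  have hDA : D * A = A := by
    have := congrArg conjTranspose hAD
    rwa [conjTranspose_mul, hDh, hAh] at this
  calc A = D * A * D := by rw [hDA, hAD]
    _ = D * Eq * M * Eq * D := by rw [hAdef]; noncomm_ring
    _ = D * M * D := by rw [hDE, mul_assoc (D * M), hED]
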